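/- If A = I − E is an n×n real matrix with |e_{ij}| ≤ ε for all 1 ≤ i,j ≤ n, e_{ii} = 0 for 1 ≤ i ≤ n, and (n−1)ε ≤ 1, then det(A) ≥ (1 − (n−1)ε)(1 + ε)^{n−1}. -/

import Mathlib

open Matrix Finset

set_option maxHeartbeats 1600000 in
private theorem det_lb_aux : ∀ n : ℕ, 1 ≤ n → ∀ ε : ℝ, 0 < ε → ((n : ℝ) - 1) * ε ≤ 1 →
    ∀ E : Matrix (Fin n) (Fin n) ℝ, (∀ i j, |E i j| ≤ ε) → (∀ i, E i i = 0) →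
    (1 - ((n : ℝ) - 1) * ε) * (1 + ε) ^ (n - 1) ≤ (1 - E).det := by
  intro n hn
  induction n, hn using Nat.le_induction with
  | base =>
    intro ε hε _ E hE hdiag
    rw [Matrix.det_fin_one]
    simp [Matrix.one_apply, hdiag 0]
  | succ n hn IH =>
    intro ε hε hsize E hE hdiag
    push_cast
    have hkε : (n : ℝ) * ε ≤ 1 := by push_cast at hsize; linarith
    have h1pos : 0 < 1 - ((n : ℝ) - 1) * ε := by
      have : (1:ℝ) ≤ n := by exact_mod_cast hn
      nlinarith
    -- the principal submatrix
    set E' : Matrix (Fin n) (Fin n) ℝ := fun i j => E i.castSucc j.castSucc with hE'def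
    have hE' : ∀ i j, |E' i j| ≤ ε := fun i j => hE _ _
    have hdiag' : ∀ i, E' i i = 0 := fun i => hdiag _
    have hsize' : ((n : ℝ) - 1) * ε ≤ 1 := by nlinarith
    have hdetA' : (1 - ((n : ℝ) - 1) * ε) * (1 + ε) ^ (n - 1) ≤ (1 - E').det :=
      IH ε hε hsize' E' hE' hdiag'
    have hPpos : (0:ℝ) < (1 + ε) ^ (n - 1) := by positivity
    have hA'pos : 0 < (1 - E').det := lt_of_lt_of_le (by positivity) hdetA'
    haveI : Invertible (1 - E') := (1 - E').invertibleOfIsUnitDet (isUnit_iff_ne_zero.mpr hA'pos.ne')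
    -- block decomposition
    set B : Matrix (Fin n) (Fin 1) ℝ := fun i _ => (1 - E) i.castSucc (Fin.last n) with hB
    set C : Matrix (Fin 1) (Fin n) ℝ := fun _ j => (1 - E) (Fin.last n) j.castSucc with hC
    set D : Matrix (Fin 1) (Fin 1) ℝ := fun _ _ => (1 - E) (Fin.last n) (Fin.last n) with hD
    have hcast_ne : ∀ i : Fin n, i.castSucc ≠ Fin.last n := fun i => Fin.castSucc_lt_last i |>.ne
    have hcastl : ∀ i : Fin n, finSumFinEquiv (Sum.inl i : Fin n ⊕ Fin 1) = i.castSucc := by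
      intro i; simp [finSumFinEquiv_apply_left]; rfl
    have hcastr : ∀ j : Fin 1, finSumFinEquiv (Sum.inr j : Fin n ⊕ Fin 1) = Fin.last n := by
      intro j
      have : (j : Fin 1) = 0 := Subsingleton.elim _ _
      subst this
      simp [finSumFinEquiv_apply_right]
      ext; simp
    have hsub : (1 - E).submatrix finSumFinEquiv finSumFinEquiv = fromBlocks (1 - E') B C D := by
      ext i j
      cases i with
      | inl i =>
        cases j with
        | inl j =>
          simp only [submatrix_apply, hcastl, fromBlocks_apply₁₁, Matrix.sub_apply, hE'def]
          congr 1
          simp [Matrix.one_apply, Fin.castSucc_inj]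
        | inr j =>
          simp only [submatrix_apply, hcastl, hcastr, fromBlocks_apply₁₂, hB]
          rfl
      | inr i =>
        cases j with
        | inl j =>
          simp only [submatrix_apply, hcastl, hcastr, fromBlocks_apply₂₁, hC]
          rfl
        | inr j =>
          simp only [submatrix_apply, hcastr, fromBlocks_apply₂₂, hD]
          rfl
    have hdet : (1 - E).det = (1 - E').det * (D - C * (1 - E')⁻¹ * B).det := by
      rw [← Matrix.det_submatrix_equiv_self finSumFinEquiv, hsub, Matrix.det_fromBlocks₁₁,
        Matrix.invOf_eq_nonsing_inv]
    -- solve the linear system for the Schur complement vector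
    set b : Fin n → ℝ := fun i => (1 - E) i.castSucc (Fin.last n) with hb
    set x : Fin n → ℝ := (1 - E')⁻¹.mulVec b with hx
    have hmulx : (1 - E').mulVec x = b := by
      rw [hx, Matrix.mulVec_mulVec,
        Matrix.mul_nonsing_inv _ (isUnit_iff_ne_zero.mpr hA'pos.ne'), Matrix.one_mulVec]
    have hxeq : ∀ i, x i = b i + ∑ j, E' i j * x j := by
      intro i
      have h := congrFun hmulx i
      rw [Matrix.sub_mulVec] at h
      simp only [Pi.sub_apply, Matrix.one_mulVec, Matrix.mulVec, dotProduct] at h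
      linarith [h]
    have hbabs : ∀ i, |b i| ≤ ε := by
      intro i
      rw [hb]
      simp only [Matrix.sub_apply, Matrix.one_apply_ne (hcast_ne i), zero_sub, abs_neg]
      exact hE _ _
    haveI : Nonempty (Fin n) := Fin.pos_iff_nonempty.mp hn
    obtain ⟨i₀, hi₀⟩ := Finite.exists_max (fun i => |x i|)
    have hsumE : ∑ j, |E' i₀ j| * |x j| ≤ ((n:ℝ) - 1) * (ε * |x i₀|) := by
      rw [← Finset.sum_erase_add _ _ (Finset.mem_univ i₀)]
      simp only [hdiag' i₀, abs_zero, zero_mul, add_zero]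
      calc ∑ j ∈ Finset.univ.erase i₀, |E' i₀ j| * |x j|
          ≤ ∑ _j ∈ Finset.univ.erase i₀, ε * |x i₀| :=
            Finset.sum_le_sum fun j _ => mul_le_mul (hE' _ _) (hi₀ j) (abs_nonneg _) hε.le
        _ = ((n:ℝ) - 1) * (ε * |x i₀|) := by
            rw [Finset.sum_const, Finset.card_erase_of_mem (Finset.mem_univ i₀),
              Finset.card_univ, Fintype.card_fin, nsmul_eq_mul, Nat.cast_sub hn, Nat.cast_one]
    have hxbound : |x i₀| * (1 - ((n:ℝ) - 1) * ε) ≤ ε := by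
      have h1 : |x i₀| ≤ |b i₀| + ∑ j, |E' i₀ j| * |x j| := by
        rw [hxeq i₀]
        refine (abs_add_le _ _).trans (add_le_add le_rfl ?_)
        calc |∑ j, E' i₀ j * x j| ≤ ∑ j, |E' i₀ j * x j| := Finset.abs_sum_le_sum_abs _ _
          _ = ∑ j, |E' i₀ j| * |x j| := by simp_rw [abs_mul]
      nlinarith [hbabs i₀, hsumE]
    -- the Schur complement scalar
    set c : Fin n → ℝ := fun j => (1 - E) (Fin.last n) j.castSucc with hc
    set sc : ℝ := ∑ j, c j * x j with hsc
    have hx' : ∀ j, ((1 - E')⁻¹ * B) j 0 = x j := by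
      intro j
      rw [Matrix.mul_apply, hx]
      simp only [Matrix.mulVec, dotProduct, hB, hb]
    have hschur : (D - C * (1 - E')⁻¹ * B).det = 1 - sc := by
      rw [Matrix.det_fin_one]
      rw [Matrix.sub_apply]
      simp only [Matrix.sub_apply, hD]
      congr 1
      · simp [Matrix.one_apply, hdiag]
      · rw [Matrix.mul_assoc, Matrix.mul_apply]
        simp only [hx', hC, hc]
        rfl
    have hcabs : ∀ j, |c j| ≤ ε := by
      intro j
      rw [hc]
      simp only [Matrix.sub_apply, Matrix.one_apply_ne (Ne.symm (hcast_ne j)), zero_sub, abs_neg]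
      exact hE _ _
    have hsabs : |sc| ≤ (n:ℝ) * (ε * |x i₀|) := by
      calc |sc| ≤ ∑ j, |c j * x j| := Finset.abs_sum_le_sum_abs _ _
        _ ≤ ∑ _j : Fin n, ε * |x i₀| := by
            refine Finset.sum_le_sum fun j _ => ?_
            rw [abs_mul]
            exact mul_le_mul (hcabs j) (hi₀ j) (abs_nonneg _) hε.le
        _ = (n:ℝ) * (ε * |x i₀|) := by
            rw [Finset.sum_const, Finset.card_univ, Fintype.card_fin, nsmul_eq_mul]
    -- final arithmetic
    have hxm : 0 ≤ |x i₀| := abs_nonneg _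
    have hspos : sc * (1 - ((n:ℝ) - 1) * ε) ≤ (n:ℝ) * ε * ε := by
      have h1 := le_abs_self sc
      have hn0 : (0:ℝ) ≤ (n:ℝ) := Nat.cast_nonneg n
      nlinarith [mul_le_mul_of_nonneg_left hxbound (mul_nonneg hn0 hε.le)]
    have hfac : (1 + ε) * (1 - (n:ℝ) * ε) ≤ (1 - sc) * (1 - ((n:ℝ) - 1) * ε) := by nlinarith
    have hs1 : 0 ≤ 1 - sc := by nlinarith [mul_nonneg (add_nonneg zero_le_one hε.le) (sub_nonneg.mpr hkε)]
    have hpow : (1 + ε) ^ (n + 1 - 1) = (1 + ε) ^ (n - 1) * (1 + ε) := by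
      rw [← pow_succ]
      congr 1
      omega
    rw [hdet, hschur]
    calc (1 - ((n:ℝ) + 1 - 1) * ε) * (1 + ε) ^ (n + 1 - 1)
        = (1 - (n:ℝ) * ε) * ((1 + ε) ^ (n - 1) * (1 + ε)) := by rw [hpow]; ring_nf
      _ ≤ ((1 - ((n:ℝ) - 1) * ε) * (1 + ε) ^ (n - 1)) * (1 - sc) := by
          nlinarith [mul_le_mul_of_nonneg_left hfac hPpos.le]
      _ ≤ (1 - E').det * (1 - sc) := mul_le_mul_of_nonneg_right hdetA' hs1

/-- If `A = I - E` with `|e i j| ≤ ε` for all `i, j`, zero diagonal `e i i = 0`, and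
`(n-1) ε ≤ 1`, then `det A ≥ (1 - (n-1) ε) (1 + ε)^(n-1)`. -/
theorem det_lower_bound_zero_diag
    (n : ℕ) (hn : 1 ≤ n) (ε : ℝ) (hε : 0 ≤ ε)
    (hsize : ((n : ℝ) - 1) * ε ≤ 1)
    (E A : Matrix (Fin n) (Fin n) ℝ)
    (hA : A = 1 - E)
    (hE : ∀ i j, |E i j| ≤ ε)
    (hdiag : ∀ i, E i i = 0) :
    (1 - ((n : ℝ) - 1) * ε) * (1 + ε) ^ (n - 1) ≤ A.det := by
  subst hA
  rcases hε.eq_or_lt with h0 | hpos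
  · have hE0 : E = 0 := by
      ext i j
      have := hE i j
      rw [← h0] at this
      simpa using abs_nonpos_iff.mp this
    subst hE0
    rw [← h0]
    simp
  · exact det_lb_aux n hn ε hpos hsize E hE hdiag
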